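/- Let U ⊂ ℝ² be open, let X = (P,Q) be a C¹ vector field on U, and let D : U → ℝ be a C¹ function. Set M = div(DX) = (∂D/∂x)P + (∂D/∂y)Q + D·div X. Assume that M ≥ 0 on U (or M ≤ 0 on U), that the set {M = 0} has zero Lebesgue measure, and that {M = 0} ∩ {D = 0} contains the image of no periodic orbit of the system. Then every periodic orbit γ of ẋ = P, ẏ = Q whose image is contained in U satisfies D(γ(t)) ≠ 0 for all t; i.e., no periodic orbit contained in U meets the set {D = 0}. -/

import Mathlib

open MeasureTheory Set

/-- Partial derivative with respect to the first coordinate. -/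
noncomputable def pdx (f : ℝ × ℝ → ℝ) (p : ℝ × ℝ) : ℝ := fderiv ℝ f p (1, 0)

/-- Partial derivative with respect to the second coordinate. -/
noncomputable def pdy (f : ℝ × ℝ → ℝ) (p : ℝ × ℝ) : ℝ := fderiv ℝ f p (0, 1)

/-- `γ` is a solution of the planar system `ẋ = P(x,y), ẏ = Q(x,y)`. -/
def IsSolution (P Q : ℝ × ℝ → ℝ) (γ : ℝ → ℝ × ℝ) : Prop :=
  ∀ t, HasDerivAt γ (P (γ t), Q (γ t)) t

/-- A periodic orbit: a nonconstant periodic solution. -/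
def IsPeriodicOrbit (P Q : ℝ × ℝ → ℝ) (γ : ℝ → ℝ × ℝ) : Prop :=
  IsSolution P Q γ ∧ (∃ T > 0, Function.Periodic γ T) ∧ ¬(∀ t, γ t = γ 0)

/-- A limit cycle: a periodic orbit whose image has a neighborhood containing
the image of no periodic orbit other than itself. -/
def IsLimitCycle (P Q : ℝ × ℝ → ℝ) (γ : ℝ → ℝ × ℝ) : Prop :=
  IsPeriodicOrbit P Q γ ∧
    ∃ U : Set (ℝ × ℝ), IsOpen U ∧ Set.range γ ⊆ U ∧
      ∀ γ' : ℝ → ℝ × ℝ, IsPeriodicOrbit P Q γ' → Set.range γ' ⊆ U →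
        Set.range γ' = Set.range γ

/-- `T` is the minimal (positive) period of `γ`. -/
def IsMinimalPeriod (γ : ℝ → ℝ × ℝ) (T : ℝ) : Prop :=
  0 < T ∧ Function.Periodic γ T ∧ ∀ T', 0 < T' → Function.Periodic γ T' → T ≤ T'

lemma fderiv_pair (D : ℝ × ℝ → ℝ) (p : ℝ × ℝ) (hDd : DifferentiableAt ℝ D p) (a b : ℝ) :
    fderiv ℝ D p (a, b) = a * pdx D p + b * pdy D p := by
  have h : ((a, b) : ℝ × ℝ) = a • ((1 : ℝ), (0 : ℝ)) + b • ((0 : ℝ), (1 : ℝ)) := by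
    simp [Prod.ext_iff]
  rw [h, (fderiv ℝ D p).map_add, (fderiv ℝ D p).map_smul, (fderiv ℝ D p).map_smul]
  simp [pdx, pdy]

lemma aux_key (U : Set (ℝ × ℝ)) (hU : IsOpen U)
    (P Q D : ℝ × ℝ → ℝ)
    (hP : ContDiffOn ℝ 1 P U) (hQ : ContDiffOn ℝ 1 Q U) (hD : ContDiffOn ℝ 1 D U)
    (M : ℝ × ℝ → ℝ)
    (hM : ∀ p, M p = pdx D p * P p + pdy D p * Q p + D p * (pdx P p + pdy Q p))
    (hsign : ∀ p ∈ U, 0 ≤ M p)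
    (γ : ℝ → ℝ × ℝ) (hsol : IsSolution P Q γ) (T : ℝ) (hT : 0 < T)
    (hper : Function.Periodic γ T) (hrange : Set.range γ ⊆ U)
    (t₀ : ℝ) (h0 : D (γ t₀) = 0) :
    ∀ t, M (γ t) = 0 ∧ D (γ t) = 0 := by
  have hmem : ∀ t, γ t ∈ U := fun t => hrange ⟨t, rfl⟩
  have hγc : Continuous γ := by
    rw [continuous_iff_continuousAt]; exact fun t => (hsol t).continuousAt
  -- divergence along the orbit
  set g : ℝ → ℝ := fun t => pdx P (γ t) + pdy Q (γ t) with hg_def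
  have hgc : Continuous g := by
    have h1 : Continuous fun t => fderiv ℝ P (γ t) :=
      (hP.continuousOn_fderiv_of_isOpen hU le_rfl).comp_continuous hγc hmem
    have h2 : Continuous fun t => fderiv ℝ Q (γ t) :=
      (hQ.continuousOn_fderiv_of_isOpen hU le_rfl).comp_continuous hγc hmem
    exact (h1.clm_apply continuous_const).add (h2.clm_apply continuous_const)
  set G : ℝ → ℝ := fun t => ∫ s in t₀..t, g s with hG_def
  have hG : ∀ t, HasDerivAt G (g t) t := fun t =>
    intervalIntegral.integral_hasDerivAt_right (hgc.intervalIntegrable _ _)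
      (hgc.stronglyMeasurable.stronglyMeasurableAtFilter) hgc.continuousAt
  set f : ℝ → ℝ := fun t => D (γ t) with hf_def
  have hDd : ∀ t, DifferentiableAt ℝ D (γ t) := fun t =>
    (hD.contDiffAt (hU.mem_nhds (hmem t))).differentiableAt one_ne_zero
  have hf : ∀ t, HasDerivAt f (M (γ t) - f t * g t) t := by
    intro t
    have h1 : HasDerivAt f (fderiv ℝ D (γ t) (P (γ t), Q (γ t))) t :=
      (hDd t).hasFDerivAt.comp_hasDerivAt t (hsol t)
    have h2 : fderiv ℝ D (γ t) (P (γ t), Q (γ t)) = M (γ t) - f t * g t := by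
      rw [fderiv_pair D (γ t) (hDd t), hM (γ t)]; simp only [hf_def, hg_def]; ring
    rwa [h2] at h1
  set h : ℝ → ℝ := fun t => f t * Real.exp (G t) with hh_def
  have hh : ∀ t, HasDerivAt h (M (γ t) * Real.exp (G t)) t := by
    intro t
    have := (hf t).mul ((hG t).exp)
    rw [show M (γ t) * Real.exp (G t) = (M (γ t) - f t * g t) * Real.exp (G t) + f t * (Real.exp (G t) * g t) by ring]
    exact this
  have hmono : Monotone h := by
    apply monotone_of_deriv_nonneg (fun t => (hh t).differentiableAt)
    intro t
    rw [(hh t).deriv]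
    exact mul_nonneg (hsign _ (hmem t)) (Real.exp_pos _).le
  have hfz : ∀ n : ℤ, f (t₀ + n * T) = 0 := by
    intro n
    have : γ (t₀ + n * T) = γ t₀ := by
      have := hper.int_mul_eq n
      calc γ (t₀ + n * T) = γ (t₀ + n • T) := by norm_num
        _ = γ t₀ := hper.zsmul n t₀
    simp only [hf_def, this, h0]
  have hhz : ∀ t ∈ Icc (t₀ - T) (t₀ + T), h t = 0 := by
    intro t ht
    have e1 : h (t₀ - T) = 0 := by
      have := hfz (-1); simp only [hh_def]
      have : f (t₀ - T) = 0 := by simpa [sub_eq_add_neg] using hfz (-1)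
      rw [this, zero_mul]
    have e2 : h (t₀ + T) = 0 := by
      have : f (t₀ + T) = 0 := by simpa using hfz 1
      simp only [hh_def]; rw [this, zero_mul]
    have l1 : h (t₀ - T) ≤ h t := hmono ht.1
    have l2 : h t ≤ h (t₀ + T) := hmono ht.2
    rw [e1] at l1; rw [e2] at l2; linarith
  have hMD : ∀ t ∈ Ioo (t₀ - T) (t₀ + T), M (γ t) = 0 ∧ D (γ t) = 0 := by
    intro t ht
    have hDz : D (γ t) = 0 := by
      have := hhz t (Ioo_subset_Icc_self ht)
      simp only [hh_def] at this
      rcases mul_eq_zero.1 this with h' | h'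
      · exact h'
      · exact absurd h' (Real.exp_ne_zero _)
    refine ⟨?_, hDz⟩
    have hzero : HasDerivAt h 0 t := by
      refine (hasDerivAt_const t (0 : ℝ)).congr_of_eventuallyEq ?_
      filter_upwards [isOpen_Ioo.mem_nhds ht] with s hs
      exact hhz s (Ioo_subset_Icc_self hs)
    have := (hh t).unique hzero
    rcases mul_eq_zero.1 this with h' | h'
    · exact h'
    · exact absurd h' (Real.exp_ne_zero _)
  intro t
  obtain ⟨y, hy, hyeq⟩ :
      ∃ y ∈ Ico t₀ (t₀ + T), (fun s => (M (γ s), D (γ s))) t = (fun s => (M (γ s), D (γ s))) y := by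
    have : Function.Periodic (fun s => (M (γ s), D (γ s))) T := fun s => by simp [hper s]
    exact this.exists_mem_Ico hT t t₀
  have hy' : y ∈ Ioo (t₀ - T) (t₀ + T) := ⟨by linarith [hy.1], hy.2⟩
  have := hMD y hy'
  simp only [Prod.ext_iff] at hyeq
  exact ⟨hyeq.1.trans this.1, hyeq.2.trans this.2⟩

/-- If `M = div(D·X)` has constant sign on the open set `U`,
vanishes only on a set of zero Lebesgue measure, and `{M = 0} ∩ {D = 0}` contains
the image of no periodic orbit, then no periodic orbit contained in `U` meets `{D = 0}`. -/
theorem stmt0 (U : Set (ℝ × ℝ)) (hU : IsOpen U)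
    (P Q D : ℝ × ℝ → ℝ)
    (hP : ContDiffOn ℝ 1 P U) (hQ : ContDiffOn ℝ 1 Q U) (hD : ContDiffOn ℝ 1 D U)
    (M : ℝ × ℝ → ℝ)
    (hM : ∀ p, M p = pdx D p * P p + pdy D p * Q p + D p * (pdx P p + pdy Q p))
    (hsign : (∀ p ∈ U, 0 ≤ M p) ∨ (∀ p ∈ U, M p ≤ 0))
    (hmeas : volume {p ∈ U | M p = 0} = 0)
    (hnoorb : ∀ γ : ℝ → ℝ × ℝ, IsPeriodicOrbit P Q γ →
        ¬ (Set.range γ ⊆ {p ∈ U | M p = 0 ∧ D p = 0}))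
    (γ : ℝ → ℝ × ℝ) (hγ : IsPeriodicOrbit P Q γ) (hrange : Set.range γ ⊆ U) :
    ∀ t, D (γ t) ≠ 0 := by
  intro t₀ h0
  obtain ⟨hsol, ⟨T, hT, hper⟩, hnc⟩ := hγ
  have key : ∀ t, M (γ t) = 0 ∧ D (γ t) = 0 := by
    rcases hsign with hs | hs
    · exact aux_key U hU P Q D hP hQ hD M hM hs γ hsol T hT hper hrange t₀ h0
    · have hM' : ∀ p, (fun q => -M q) p =
          pdx (fun q => -D q) p * P p + pdy (fun q => -D q) p * Q p +
            (fun q => -D q) p * (pdx P p + pdy Q p) := by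
        intro p
        have hx : pdx (fun q => -D q) p = -pdx D p := by
          simp [pdx, fderiv_neg]
        have hy : pdy (fun q => -D q) p = -pdy D p := by
          simp [pdy, fderiv_neg]
        simp only [hx, hy, hM p]; ring
      have hs' : ∀ p ∈ U, 0 ≤ (fun q => -M q) p := fun p hp => by
        simpa using hs p hp
      have h0' : (fun q => -D q) (γ t₀) = 0 := by simp [h0]
      have := aux_key U hU P Q (fun q => -D q) hP hQ hD.neg (fun q => -M q) hM' hs'
        γ hsol T hT hper hrange t₀ h0'
      intro t
      have ht := this t
      constructor
      · simpa using ht.1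
      · simpa using ht.2
  exact hnoorb γ ⟨hsol, ⟨T, hT, hper⟩, hnc⟩ (by
    rintro p ⟨t, rfl⟩
    exact ⟨hrange ⟨t, rfl⟩, (key t).1, (key t).2⟩)
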